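/- Let A be an associative algebra over a field K which decomposes as a direct sum of K-subspaces A = A₁ ⊕ A₂, where A₁ is a subalgebra (closed under multiplication) but A₂ is merely a complementary subspace, and let P₁, P₂ be the corresponding projections. Then the product A ∘ B = P₁(A)·P₁(B) + P₂( P₁(A)·P₂(B) + P₂(A)·P₁(B) ) is associative. Moreover, when A₂ is itself a subalgebra, this product coincides with the deformed product ∘_{P₁}, i.e. A ∘_{P₁} B = P₁(A)·P₁(B) + P₂( P₁(A)·P₂(B) + P₂(A)·P₁(B) ) for all A, B in A. -/

import Mathlib

/-- The deformed product `A ∘_M B = M(A)·B + A·M(B) − M(A·B)`. -/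
def circN {K A : Type*} [Field K] [NonUnitalRing A] [Module K A]
    [SMulCommClass K A A] [IsScalarTower K A A]
    (M : A →ₗ[K] A) (a b : A) : A :=
  M a * b + a * M b - M (a * b)

/-- Let `A = A₁ ⊕ A₂` with `A₁` a subalgebra and `A₂` merely a complementary
subspace, with projections `P₁, P₂`. Then
`A ∘ B = P₁(A)·P₁(B) + P₂(P₁(A)·P₂(B) + P₂(A)·P₁(B))` is associative; moreover,
if `A₂` is itself a subalgebra, this product coincides with `∘_{P₁}`. -/
theorem contracted_product_assoc_and_eq_circ_proj
    {K A : Type*} [Field K] [NonUnitalRing A] [Module K A]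
    [SMulCommClass K A A] [IsScalarTower K A A]
    (A₁ A₂ : Submodule K A) (hc : IsCompl A₁ A₂)
    (h₁ : ∀ x y : A, x ∈ A₁ → y ∈ A₁ → x * y ∈ A₁)
    (P₁ P₂ : A →ₗ[K] A)
    (hP₁ : P₁ = A₁.subtype ∘ₗ A₁.linearProjOfIsCompl A₂ hc)
    (hP₂ : P₂ = A₂.subtype ∘ₗ A₂.linearProjOfIsCompl A₁ hc.symm) :
    (∀ a b c : A,
      (P₁ (P₁ a * P₁ b + P₂ (P₁ a * P₂ b + P₂ a * P₁ b)) * P₁ c +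
        P₂ (P₁ (P₁ a * P₁ b + P₂ (P₁ a * P₂ b + P₂ a * P₁ b)) * P₂ c +
            P₂ (P₁ a * P₁ b + P₂ (P₁ a * P₂ b + P₂ a * P₁ b)) * P₁ c)) =
      (P₁ a * P₁ (P₁ b * P₁ c + P₂ (P₁ b * P₂ c + P₂ b * P₁ c)) +
        P₂ (P₁ a * P₂ (P₁ b * P₁ c + P₂ (P₁ b * P₂ c + P₂ b * P₁ c)) +
            P₂ a * P₁ (P₁ b * P₁ c + P₂ (P₁ b * P₂ c + P₂ b * P₁ c))))) ∧
    ((∀ x y : A, x ∈ A₂ → y ∈ A₂ → x * y ∈ A₂) →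
      ∀ a b : A,
        circN P₁ a b = P₁ a * P₁ b + P₂ (P₁ a * P₂ b + P₂ a * P₁ b)) := by
  have hmem1 : ∀ x : A, P₁ x ∈ A₁ := by intro x; rw [hP₁]; exact (A₁.linearProjOfIsCompl A₂ hc x).2
  have hmem2 : ∀ x : A, P₂ x ∈ A₂ := by intro x; rw [hP₂]; exact (A₂.linearProjOfIsCompl A₁ hc.symm x).2
  have hP1eq : ∀ x : A, x ∈ A₁ → P₁ x = x := by
    intro x hx; rw [hP₁]
    exact congrArg Subtype.val (Submodule.projectionOnto_apply_left hc ⟨x, hx⟩)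
  have hP1z : ∀ x : A, x ∈ A₂ → P₁ x = 0 := by
    intro x hx; rw [hP₁]
    simp; exact Submodule.projectionOnto_apply_of_mem_right hc hx
  have hsub : ∀ x : A, P₂ x = x - P₁ x := by
    intro x; rw [hP₁, hP₂]
    have := Submodule.projection_add_projection_eq_self hc x
    simp only [LinearMap.comp_apply, Submodule.subtype_apply]
    exact eq_sub_of_add_eq' this
  have hP2z : ∀ x : A, x ∈ A₁ → P₂ x = 0 := by
    intro x hx; rw [hsub, hP1eq x hx, sub_self]
  have hP2eq : ∀ x : A, x ∈ A₂ → P₂ x = x := by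
    intro x hx; rw [hsub, hP1z x hx, sub_zero]
  constructor
  · intro a b c
    have X := hmem1 a; have Y := hmem1 b; have Z := hmem1 c
    set u := P₁ a; set v := P₁ b; set w := P₁ c
    set s := P₂ a; set t := P₂ b; set r := P₂ c
    have huv : u * v ∈ A₁ := h₁ _ _ X Y
    have hvw : v * w ∈ A₁ := h₁ _ _ Y Z
    have A1 : P₁ (u * v + P₂ (u * t + s * v)) = u * v := by
      rw [map_add, hP1eq _ huv, hP1z _ (hmem2 _), add_zero]
    have A2 : P₂ (u * v + P₂ (u * t + s * v)) = P₂ (u * t + s * v) := by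
      rw [map_add, hP2z _ huv, hP2eq _ (hmem2 _), zero_add]
    have B1 : P₁ (v * w + P₂ (v * r + t * w)) = v * w := by
      rw [map_add, hP1eq _ hvw, hP1z _ (hmem2 _), add_zero]
    have B2 : P₂ (v * w + P₂ (v * r + t * w)) = P₂ (v * r + t * w) := by
      rw [map_add, hP2z _ hvw, hP2eq _ (hmem2 _), zero_add]
    rw [A1, A2, B1, B2, hsub (u * t + s * v), hsub (v * r + t * w)]
    have e1a : P₂ (P₁ (u * t) * w) = 0 := hP2z _ (h₁ _ _ (hmem1 _) Z)
    have e1b : P₂ (P₁ (s * v) * w) = 0 := hP2z _ (h₁ _ _ (hmem1 _) Z)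
    have e2a : P₂ (u * P₁ (v * r)) = 0 := hP2z _ (h₁ _ _ X (hmem1 _))
    have e2b : P₂ (u * P₁ (t * w)) = 0 := hP2z _ (h₁ _ _ X (hmem1 _))
    simp only [sub_mul, mul_sub, add_mul, mul_add, map_add, map_sub, map_zero,
      e1a, e1b, e2a, e2b, mul_assoc]
    abel
  · intro h₂ a b
    have hab : a * b = (P₁ a + P₂ a) * (P₁ b + P₂ b) := by
      rw [hsub, hsub]
      rw [add_sub_cancel, add_sub_cancel]
    simp only [circN]
    have h1b : P₁ a * b = P₁ a * (P₁ b + P₂ b) := by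
      congr 1; rw [hsub]; rw [add_sub_cancel]
    have h1a : a * P₁ b = (P₁ a + P₂ a) * P₁ b := by
      congr 1; rw [hsub]; rw [add_sub_cancel]
    rw [h1b, h1a, hab]
    have huv := h₁ _ _ (hmem1 a) (hmem1 b)
    have hst := h₂ _ _ (hmem2 a) (hmem2 b)
    simp only [add_mul, mul_add, map_add, hP1eq _ huv, hP1z _ hst,
      hP2z _ huv, hP2eq _ hst, hsub (P₁ a * P₂ b), hsub (P₂ a * P₁ b)]
    abel
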